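/- Convergence of the Kontsevich iterated-integral representation: Let k = (k_1,…,k_p) be a tuple of positive integers with k_1 ≥ 2 and n = k_1+…+k_p. Then the function H_{w(k)}(t) = Π_{i=1}^n h_{w(k)_i}(t_i), with h_1(t) = 1/(1−t) and h_0(t) = 1/t, is Lebesgue integrable on the open simplex Δ_n = {0 < t_1 < … < t_n < 1} and ∫_{Δ_n} H_{w(k)} = ζ(k_1,…,k_p). -/

import Mathlib

open MeasureTheory

/-- The multiple zeta value `ζ(k₁,…,k_p) = ∑_{n₁ > … > n_p > 0} 1/(n₁^{k₁} ⋯ n_p^{k_p})`. -/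
noncomputable def zeta (k : List ℕ) : ℝ :=
  ∑' n : {f : Fin k.length → ℕ // StrictAnti f ∧ ∀ i, 0 < f i},
    ∏ i : Fin k.length, (1 : ℝ) / (n.1 i : ℝ) ^ (k.get i)

/-- The word `w(k) = (1, 0^{k_p−1}, 1, 0^{k_{p−1}−1}, …, 1, 0^{k_1−1})` in `{0,1}`
(`true` standing for `1` and `false` for `0`) attached to the tuple `k = (k₁,…,k_p)`. -/
def word (k : List ℕ) : List Bool :=
  (k.reverse.map (fun a => true :: List.replicate (a - 1) false)).flatten

/-- `h 1 t = 1/(1−t)` and `h 0 t = 1/t`. -/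
noncomputable def h (b : Bool) (t : ℝ) : ℝ := if b then 1 / (1 - t) else 1 / t

/-- The open simplex `Δ_N = {0 < t₁ < … < t_N < 1}`. -/
def simplex (N : ℕ) : Set (Fin N → ℝ) :=
  {t | StrictMono t ∧ ∀ i, t i ∈ Set.Ioo (0 : ℝ) 1}

open scoped ENNReal

namespace Kont


/-- Index set of strictly decreasing positive tuples. -/
abbrev Idx (p : ℕ) := {f : Fin p → ℕ // StrictAnti f ∧ ∀ i, 0 < f i}

noncomputable def hE (b : Bool) (t : ℝ) : ℝ≥0∞ := ENNReal.ofReal (h b t)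

lemma measurable_h (b : Bool) : Measurable (h b) := by
  have he : h b = fun t => if b then (1 - t)⁻¹ else t⁻¹ := by
    funext t; cases b <;> simp [h, one_div]
  rw [he]
  cases b
  · show Measurable fun t : ℝ => t⁻¹
    exact measurable_id.inv
  · show Measurable fun t : ℝ => (1 - t)⁻¹
    exact (measurable_const.sub measurable_id).inv

lemma measurable_hE (b : Bool) : Measurable (hE b) :=
  ENNReal.measurable_ofReal.comp (measurable_h b)

/-- Simplex with upper bound `x`. -/
def S (n : ℕ) (x : ℝ) : Set (Fin n → ℝ) := {t | StrictMono t ∧ ∀ i, t i ∈ Set.Ioo 0 x}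

lemma measurableSet_S (n : ℕ) (x : ℝ) : MeasurableSet (S n x) := by
  have h1 : S n x = (⋂ (i : Fin n) (j : Fin n) (_ : i < j), {t : Fin n → ℝ | t i < t j}) ∩
      (⋂ i : Fin n, (fun t : Fin n → ℝ => t i) ⁻¹' Set.Ioo 0 x) := by
    ext t
    simp only [S, Set.mem_setOf_eq, Set.mem_inter_iff, Set.mem_iInter, Set.mem_preimage]
    exact ⟨fun ht => ⟨fun i j hij => ht.1 hij, ht.2⟩, fun ht => ⟨fun i j hij => ht.1 i j hij, ht.2⟩⟩
  rw [h1]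
  exact (MeasurableSet.iInter fun i => MeasurableSet.iInter fun j => MeasurableSet.iInter
      fun _ => measurableSet_lt (measurable_pi_apply i) (measurable_pi_apply j)).inter
    (MeasurableSet.iInter fun i => (measurable_pi_apply i) measurableSet_Ioo)

lemma snoc_mem_S {n : ℕ} {x s : ℝ} {u : Fin n → ℝ} :
    Fin.snoc u s ∈ S (n + 1) x ↔ s ∈ Set.Ioo 0 x ∧ u ∈ S n s := by
  constructor
  · rintro ⟨hm, hb⟩
    have hus : ∀ j : Fin n, u j < s := fun j => by
      have := hm (Fin.castSucc_lt_last j)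
      simpa [Fin.snoc_castSucc, Fin.snoc_last] using this
    refine ⟨by simpa [Fin.snoc_last] using hb (Fin.last n), ?_, fun j => ?_⟩
    · intro i j hij
      have := hm (Fin.castSucc_lt_castSucc_iff.2 hij)
      simpa [Fin.snoc_castSucc] using this
    · exact ⟨by simpa [Fin.snoc_castSucc] using (hb j.castSucc).1, hus j⟩
  · rintro ⟨hs, hu, hub⟩
    have hus : ∀ j : Fin n, u j < s := fun j => (hub j).2
    constructor
    · intro i j hij
      have hi : i ≠ Fin.last n := fun hEq => by
        subst hEq; exact absurd (lt_of_lt_of_le hij (Fin.le_last j)) (lt_irrefl _)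
      obtain ⟨i', rfl⟩ := Fin.exists_castSucc_eq.2 hi
      by_cases hj : j = Fin.last n
      · subst hj
        simpa [Fin.snoc_castSucc, Fin.snoc_last] using hus i'
      · obtain ⟨j', rfl⟩ := Fin.exists_castSucc_eq.2 hj
        have : i' < j' := Fin.castSucc_lt_castSucc_iff.1 hij
        simpa [Fin.snoc_castSucc] using hu this
    · intro i
      refine Fin.lastCases ?_ ?_ i
      · simpa [Fin.snoc_last] using hs
      · intro j
        exact ⟨by simpa [Fin.snoc_castSucc] using (hub j).1,
          by simpa [Fin.snoc_castSucc] using lt_trans (hus j) hs.2⟩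

instance uniqueIdx0 : Unique (Idx 0) :=
  ⟨⟨⟨fun i => i.elim0, fun a _ _ => a.elim0, fun i => i.elim0⟩⟩,
    fun a => Subtype.ext (funext fun i => i.elim0)⟩

noncomputable def J (n : ℕ) (g : Fin n → ℝ → ℝ≥0∞) (x : ℝ) : ℝ≥0∞ :=
  ∫⁻ t in S n x, ∏ i, g i (t i)

lemma J_snoc (n : ℕ) (g : Fin n → ℝ → ℝ≥0∞) (hg : ∀ i, Measurable (g i))
    (gb : ℝ → ℝ≥0∞) (hgb : Measurable gb) (x : ℝ) :
    J (n + 1) (Fin.snoc g gb) x = ∫⁻ s in Set.Ioo 0 x, gb s * J n g s := by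
  classical
  set f : (Fin (n + 1) → ℝ) → ℝ≥0∞ :=
    fun t => ∏ i, (Fin.snoc g gb : Fin (n + 1) → ℝ → ℝ≥0∞) i (t i) with hf
  have hmeas : ∀ i : Fin (n + 1), Measurable ((Fin.snoc g gb : Fin (n+1) → ℝ → ℝ≥0∞) i) := by
    refine Fin.lastCases ?_ ?_
    · simpa using hgb
    · intro j; simpa using hg j
  have hfm : Measurable f :=
    Finset.measurable_prod _ fun i _ => (hmeas i).comp (measurable_pi_apply i)
  have hFm : Measurable fun u : Fin n → ℝ => ∏ j, g j (u j) :=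
    Finset.measurable_prod _ fun j _ => (hg j).comp (measurable_pi_apply j)
  set e := MeasurableEquiv.piFinSuccAbove (fun _ : Fin (n + 1) => ℝ) (Fin.last n) with he
  have hsymm : ∀ (s : ℝ) (u : Fin n → ℝ), e.symm (s, u) = Fin.snoc u s := by
    intro s u
    simp [he, MeasurableEquiv.piFinSuccAbove, Fin.insertNthEquiv, Fin.insertNth_last']
  have hind : Measurable ((S (n + 1) x).indicator f) := hfm.indicator (measurableSet_S _ _)
  have h1 : J (n + 1) (Fin.snoc g gb) x = ∫⁻ t, (S (n + 1) x).indicator f t := by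
    rw [J, ← lintegral_indicator (measurableSet_S _ _)]
  have mp := measurePreserving_piFinSuccAbove (fun _ : Fin (n + 1) => (volume : Measure ℝ))
    (Fin.last n)
  have h2 : (∫⁻ t, (S (n + 1) x).indicator f t) =
      ∫⁻ y, (S (n + 1) x).indicator f (e.symm y)
        ∂((volume : Measure ℝ).prod (Measure.pi fun _ : Fin n => (volume : Measure ℝ))) := by
    have hc := mp.lintegral_comp (hind.comp e.symm.measurable)
    simp only [Function.comp, MeasurableEquiv.symm_apply_apply] at hc
    rw [volume_pi]
    refine Eq.trans (lintegral_congr fun a => ?_) hc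
    exact congrArg ((S (n + 1) x).indicator f) (e.symm_apply_apply a).symm
  have h3 : (∫⁻ y, (S (n + 1) x).indicator f (e.symm y)
        ∂((volume : Measure ℝ).prod (Measure.pi fun _ : Fin n => (volume : Measure ℝ)))) =
      ∫⁻ s, ∫⁻ u, (S (n + 1) x).indicator f (e.symm (s, u))
        ∂(Measure.pi fun _ : Fin n => (volume : Measure ℝ)) ∂(volume : Measure ℝ) :=
    lintegral_prod _ ((hind.comp e.symm.measurable).aemeasurable)
  have hpt : ∀ (s : ℝ) (u : Fin n → ℝ),
      (S (n + 1) x).indicator f (e.symm (s, u)) =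
        (Set.Ioo 0 x).indicator gb s * (S n s).indicator (fun u => ∏ j, g j (u j)) u := by
    intro s u
    rw [hsymm]
    by_cases h1 : s ∈ Set.Ioo 0 x <;> by_cases h2 : u ∈ S n s
    · have hmem : Fin.snoc u s ∈ S (n + 1) x := snoc_mem_S.2 ⟨h1, h2⟩
      rw [Set.indicator_of_mem hmem, Set.indicator_of_mem h1, Set.indicator_of_mem h2]
      rw [hf]
      simp only [Fin.prod_univ_castSucc, Fin.snoc_castSucc, Fin.snoc_last]
      rw [mul_comm]
    · have hmem : Fin.snoc u s ∉ S (n + 1) x := fun hc => h2 (snoc_mem_S.1 hc).2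
      rw [Set.indicator_of_notMem hmem, Set.indicator_of_notMem h2, mul_zero]
    · have hmem : Fin.snoc u s ∉ S (n + 1) x := fun hc => h1 (snoc_mem_S.1 hc).1
      rw [Set.indicator_of_notMem hmem, Set.indicator_of_notMem h1, zero_mul]
    · have hmem : Fin.snoc u s ∉ S (n + 1) x := fun hc => h1 (snoc_mem_S.1 hc).1
      rw [Set.indicator_of_notMem hmem, Set.indicator_of_notMem h1, zero_mul]
  calc J (n + 1) (Fin.snoc g gb) x
      = ∫⁻ s, ∫⁻ u, (S (n + 1) x).indicator f (e.symm (s, u))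
          ∂(Measure.pi fun _ : Fin n => (volume : Measure ℝ)) ∂(volume : Measure ℝ) := by
        rw [h1, h2, h3]
    _ = ∫⁻ s, (Set.Ioo 0 x).indicator gb s * J n g s ∂(volume : Measure ℝ) := by
        refine lintegral_congr fun s => ?_
        simp only [hpt]
        rw [lintegral_const_mul _ (hFm.indicator (measurableSet_S _ _)),
          lintegral_indicator (measurableSet_S _ _)]
        rw [J, ← volume_pi]
    _ = ∫⁻ s in Set.Ioo 0 x, gb s * J n g s := by
        rw [← lintegral_indicator measurableSet_Ioo]
        refine lintegral_congr fun s => ?_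
        by_cases hs : s ∈ Set.Ioo 0 x <;> simp [hs]

lemma lint_pow (m : ℕ) {x : ℝ} (hx : 0 ≤ x) :
    ∫⁻ s in Set.Ioo 0 x, ENNReal.ofReal (s ^ m) =
      ENNReal.ofReal (1 / ((m : ℝ) + 1)) * ENNReal.ofReal x ^ (m + 1) := by
  have hInt : IntegrableOn (fun s : ℝ => s ^ m) (Set.Ioo 0 x) :=
    ((continuous_pow m).integrableOn_Icc).mono_set Set.Ioo_subset_Icc_self
  have hnn : 0 ≤ᵐ[volume.restrict (Set.Ioo 0 x)] fun s : ℝ => s ^ m :=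
    (ae_restrict_mem measurableSet_Ioo).mono fun s hs => pow_nonneg (le_of_lt hs.1) m
  rw [← ofReal_integral_eq_lintegral_ofReal hInt hnn, ← ENNReal.ofReal_pow hx,
    ← ENNReal.ofReal_mul (by positivity)]
  congr 1
  rw [← integral_Ioc_eq_integral_Ioo, ← intervalIntegral.integral_of_le hx, integral_pow]
  rw [zero_pow (Nat.succ_ne_zero m)]
  ring

lemma hE_false_mul_pow {s : ℝ} (hs : 0 < s) (m : ℕ) :
    hE false s * ENNReal.ofReal s ^ (m + 1) = ENNReal.ofReal (s ^ m) := by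
  have : h false s = 1 / s := by simp [h]
  rw [hE, this, ← ENNReal.ofReal_pow hs.le, ← ENNReal.ofReal_mul (by positivity)]
  congr 1
  rw [pow_succ]
  field_simp

lemma hE_true_eq_tsum {s : ℝ} (hs0 : 0 ≤ s) (hs1 : s < 1) :
    hE true s = ∑' m : ℕ, ENNReal.ofReal s ^ m := by
  rw [ENNReal.tsum_geometric]
  have : h true s = (1 - s)⁻¹ := by simp [h]
  rw [hE, this, ENNReal.ofReal_inv_of_pos (by linarith), ENNReal.ofReal_sub _ hs0,
    ENNReal.ofReal_one]
def fst {p : ℕ} (n : Idx p) : ℕ := if h : 0 < p then n.1 ⟨0, h⟩ else 0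

lemma fst_succ {p : ℕ} (n : Idx (p + 1)) : fst n = n.1 0 := by
  rw [fst, dif_pos (Nat.succ_pos p)]
  exact congrArg n.1 (by simp [Fin.ext_iff])

lemma fst_pos {p : ℕ} (n : Idx (p + 1)) : 0 < fst n := by
  rw [fst_succ]; exact n.2.2 0

def tailIdx {p : ℕ} (n : Idx (p + 1)) : Idx p :=
  ⟨Fin.tail n.1, fun i j hij => n.2.1 (Fin.succ_lt_succ_iff.2 hij), fun i => n.2.2 i.succ⟩

lemma strictAnti_cons {p : ℕ} (g : Fin p → ℕ) (hg : StrictAnti g) (v : ℕ)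
    (hv : ∀ i : Fin p, g i < v) : StrictAnti (Fin.cons v g : Fin (p + 1) → ℕ) := by
  intro i j hij
  obtain ⟨j', rfl⟩ := Fin.eq_succ_of_ne_zero
    (Fin.pos_iff_ne_zero.1 (lt_of_le_of_lt (Fin.zero_le i) hij))
  rcases eq_or_ne i 0 with rfl | hi
  · simpa [Fin.cons_succ, Fin.cons_zero] using hv j'
  · obtain ⟨i', rfl⟩ := Fin.eq_succ_of_ne_zero hi
    simp only [Fin.cons_succ]
    exact hg (Fin.succ_lt_succ_iff.1 hij)

def consIdx {p : ℕ} (m : ℕ) (n : Idx p) : Idx (p + 1) :=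
  ⟨Fin.cons (m + fst n + 1) n.1,
    strictAnti_cons n.1 n.2.1 _ (fun i => by
      have hp : 0 < p := i.pos
      have h1 : n.1 i ≤ n.1 ⟨0, hp⟩ := n.2.1.antitone (by exact Fin.mk_le_of_le_val (Nat.zero_le _))
      have h2 : fst n = n.1 ⟨0, hp⟩ := by rw [fst, dif_pos hp]
      omega),
    fun i => by
      refine Fin.cases ?_ ?_ i
      · simp
      · intro j; simpa using n.2.2 j⟩

lemma fst_tail_lt {p : ℕ} (n : Idx (p + 1)) : fst (tailIdx n) < n.1 0 := by
  rcases Nat.eq_zero_or_pos p with hp | hp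
  · subst hp
    rw [fst, dif_neg (lt_irrefl 0)]
    exact n.2.2 0
  · rw [fst, dif_pos hp]
    exact n.2.1 (by exact Fin.succ_pos _)

def consEquiv (p : ℕ) : ℕ × Idx p ≃ Idx (p + 1) where
  toFun q := consIdx q.1 q.2
  invFun n := (n.1 0 - fst (tailIdx n) - 1, tailIdx n)
  left_inv q := by
    obtain ⟨m, n⟩ := q
    have ht : tailIdx (consIdx m n) = n :=
      Subtype.ext (funext fun i => by simp [tailIdx, consIdx, Fin.tail])
    simp only [ht]
    have h0 : (consIdx m n).1 0 = m + fst n + 1 := by simp [consIdx]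
    rw [Prod.mk.injEq]
    exact ⟨by rw [h0]; omega, rfl⟩
  right_inv n := by
    have hlt := fst_tail_lt n
    have hpos := n.2.2 0
    refine Subtype.ext (funext fun i => ?_)
    refine Fin.cases ?_ ?_ i
    · simp only [consIdx, Fin.cons_zero]
      omega
    · intro j
      simp [consIdx, Fin.cons_succ, tailIdx, Fin.tail]

lemma consIdx_zero {p : ℕ} (m : ℕ) (n : Idx p) : (consIdx m n).1 0 = m + fst n + 1 := by
  simp [consIdx]

lemma consIdx_fst {p : ℕ} (m : ℕ) (n : Idx p) : fst (consIdx m n) = m + fst n + 1 := by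
  rw [fst_succ]; simp [consIdx]

lemma consIdx_tail {p : ℕ} (m : ℕ) (n : Idx p) : tailIdx (consIdx m n) = n :=
  Subtype.ext (funext fun i => by simp [tailIdx, consIdx, Fin.tail])

noncomputable def coeff {p : ℕ} (e : Fin p → ℕ) (n : Idx p) : ℝ≥0∞ :=
  ∏ i, ENNReal.ofReal ((1 : ℝ) / (n.1 i : ℝ) ^ (e i))

noncomputable def G {p : ℕ} (e : Fin p → ℕ) (x : ℝ) : ℝ≥0∞ :=
  ∑' n : Idx p, coeff e n * ENNReal.ofReal x ^ fst n

lemma coeff_cons {p : ℕ} (a : ℕ) (e : Fin p → ℕ) (n : Idx (p + 1)) :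
    coeff (Fin.cons a e) n
      = ENNReal.ofReal ((1 : ℝ) / (n.1 0 : ℝ) ^ a) * coeff e (tailIdx n) := by
  rw [coeff, Fin.prod_univ_succ, Fin.cons_zero]
  congr 1

lemma step_false {p : ℕ} (a : ℕ) (e : Fin p → ℕ) {x : ℝ} (hx0 : 0 < x) (hx1 : x ≤ 1) :
    ∫⁻ s in Set.Ioo 0 x, hE false s * G (Fin.cons a e) s = G (Fin.cons (a + 1) e) x := by
  have hm : ∀ m : ℕ, Measurable fun s : ℝ => ENNReal.ofReal (s ^ m) := fun m =>
    ENNReal.measurable_ofReal.comp (measurable_id.pow_const m)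
  have hcongr : ∀ s ∈ Set.Ioo (0 : ℝ) x, hE false s * G (Fin.cons a e) s
      = ∑' n : Idx (p + 1), coeff (Fin.cons a e) n * ENNReal.ofReal (s ^ (n.1 0 - 1)) := by
    intro s hs
    rw [G, ← ENNReal.tsum_mul_left]
    refine tsum_congr fun n => ?_
    rw [mul_left_comm]
    congr 1
    have he : fst n = (n.1 0 - 1) + 1 := by
      have h1 := n.2.2 0; rw [fst_succ]; omega
    rw [he, hE_false_mul_pow hs.1]
  rw [setLIntegral_congr_fun_ae measurableSet_Ioo (ae_of_all _ hcongr),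
    lintegral_tsum fun n => ((hm _).const_mul _).aemeasurable, G]
  refine tsum_congr fun n => ?_
  rw [lintegral_const_mul _ (hm _), lint_pow _ hx0.le]
  have hpos := n.2.2 0
  obtain ⟨m0, hm0⟩ : ∃ m0, n.1 0 = m0 + 1 := ⟨n.1 0 - 1, by omega⟩
  rw [fst_succ, coeff_cons, coeff_cons, hm0]
  simp only [Nat.add_sub_cancel]
  have hc : ((m0 : ℝ)) + 1 = ((m0 + 1 : ℕ) : ℝ) := by push_cast; ring
  rw [hc]
  have halg : ENNReal.ofReal ((1 : ℝ) / ((m0 + 1 : ℕ) : ℝ) ^ a) *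
        ENNReal.ofReal (1 / ((m0 + 1 : ℕ) : ℝ))
      = ENNReal.ofReal ((1 : ℝ) / ((m0 + 1 : ℕ) : ℝ) ^ (a + 1)) := by
    rw [← ENNReal.ofReal_mul (by positivity), one_div_mul_one_div, ← pow_succ]
  rw [← halg]
  ring

lemma step_true {p : ℕ} (e : Fin p → ℕ) {x : ℝ} (hx0 : 0 < x) (hx1 : x ≤ 1) :
    ∫⁻ s in Set.Ioo 0 x, hE true s * G e s = G (Fin.cons 1 e) x := by
  have hm : ∀ m : ℕ, Measurable fun s : ℝ => ENNReal.ofReal (s ^ m) := fun m =>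
    ENNReal.measurable_ofReal.comp (measurable_id.pow_const m)
  have hcongr : ∀ s ∈ Set.Ioo (0 : ℝ) x, hE true s * G e s
      = ∑' q : ℕ × Idx p, coeff e q.2 * ENNReal.ofReal (s ^ (q.1 + fst q.2)) := by
    intro s hs
    have hs1 : s < 1 := lt_of_lt_of_le hs.2 hx1
    rw [hE_true_eq_tsum hs.1.le hs1, G, ← ENNReal.tsum_mul_right, ENNReal.tsum_prod']
    refine tsum_congr fun m => ?_
    rw [← ENNReal.tsum_mul_left]
    refine tsum_congr fun n => ?_
    rw [mul_left_comm, ENNReal.ofReal_pow hs.1.le, pow_add]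
    try ring
  rw [setLIntegral_congr_fun_ae measurableSet_Ioo (ae_of_all _ hcongr),
    lintegral_tsum fun q => ((hm _).const_mul _).aemeasurable, G,
    ← Equiv.tsum_eq (consEquiv p)]
  refine tsum_congr fun q => ?_
  obtain ⟨m, n⟩ := q
  rw [lintegral_const_mul _ (hm _), lint_pow _ hx0.le]
  show coeff e n * (ENNReal.ofReal (1 / (((m + fst n : ℕ) : ℝ) + 1)) *
      ENNReal.ofReal x ^ (m + fst n + 1))
    = coeff (Fin.cons 1 e) (consIdx m n) * ENNReal.ofReal x ^ fst (consIdx m n)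
  rw [coeff_cons, consIdx_tail, consIdx_fst, consIdx_zero, pow_one]
  have hc : ((m + fst n : ℕ) : ℝ) + 1 = ((m + fst n + 1 : ℕ) : ℝ) := by push_cast; ring
  rw [hc]
  try ring

lemma consEquiv_apply {p : ℕ} (q : ℕ × Idx p) : consEquiv p q = consIdx q.1 q.2 := rfl
noncomputable def WInt (w : List Bool) (x : ℝ) : ℝ≥0∞ :=
  J w.length (fun i => hE (w.get i)) x

lemma J_cast {n m : ℕ} (e : n = m) (g : Fin n → ℝ → ℝ≥0∞) (x : ℝ) :
    J n g x = J m (fun i => g (Fin.cast e.symm i)) x := by subst e; rfl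

lemma WInt_snoc (w : List Bool) (b : Bool) (x : ℝ) :
    WInt (w ++ [b]) x = ∫⁻ s in Set.Ioo 0 x, hE b s * WInt w s := by
  have hlen : (w ++ [b]).length = w.length + 1 := by simp
  rw [WInt, J_cast hlen]
  have hfun : (fun i : Fin (w.length + 1) => hE ((w ++ [b]).get (Fin.cast hlen.symm i)))
      = Fin.snoc (fun i => hE (w.get i)) (hE b) := by
    funext i
    refine Fin.lastCases ?_ ?_ i
    · rw [Fin.snoc_last]
      refine congrArg hE ?_
      simp only [List.get_eq_getElem, Fin.coe_cast, Fin.val_last]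
      exact List.getElem_concat_length rfl _
    · intro j
      rw [Fin.snoc_castSucc]
      refine congrArg hE ?_
      simp only [List.get_eq_getElem, Fin.coe_cast, Fin.coe_castSucc]
      exact List.getElem_append_left j.2
  rw [hfun, J_snoc _ _ (fun i => measurable_hE _) _ (measurable_hE b)]
  rfl

lemma WInt_nil (x : ℝ) : WInt [] x = 1 := by
  have h0 : WInt [] x = ∫⁻ t in S 0 x, ∏ i : Fin 0, hE (([] : List Bool).get i) (t i) := rfl
  rw [h0]
  have hS : S 0 x = Set.univ := by
    ext t
    exact ⟨fun _ => trivial, fun _ => ⟨fun a => a.elim0, fun i => i.elim0⟩⟩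
  rw [hS, Measure.restrict_univ]
  simp only [Finset.univ_eq_empty, Finset.prod_empty, lintegral_one]
  rw [volume_pi, Measure.pi_univ]
  simp

lemma G_nil (e : Fin 0 → ℕ) (x : ℝ) : G e x = 1 := by
  rw [G, tsum_eq_single (default : Idx 0) (fun b hb => absurd (Subsingleton.elim b default) hb)]
  have : fst (default : Idx 0) = 0 := by rw [fst, dif_neg (lt_irrefl 0)]
  simp [coeff, this]

lemma step_aux (w : List Bool) {p : ℕ} (e : Fin p → ℕ)
    (hw : ∀ x : ℝ, 0 < x → x ≤ 1 → WInt w x = G e x) (m : ℕ) :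
    ∀ x : ℝ, 0 < x → x ≤ 1 →
      WInt (w ++ true :: List.replicate m false) x = G (Fin.cons (m + 1) e) x := by
  induction m with
  | zero =>
    intro x hx0 hx1
    have hw1 : w ++ true :: List.replicate 0 false = w ++ [true] := rfl
    rw [hw1, WInt_snoc, setLIntegral_congr_fun_ae measurableSet_Ioo
      (ae_of_all _ fun s hs => by rw [hw s hs.1 (le_of_lt (lt_of_lt_of_le hs.2 hx1))]),
      step_true e hx0 hx1]
  | succ m ih =>
    intro x hx0 hx1
    have hw1 : w ++ true :: List.replicate (m + 1) false
        = (w ++ true :: List.replicate m false) ++ [false] := by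
      rw [List.replicate_succ']
      simp
    rw [hw1, WInt_snoc, setLIntegral_congr_fun_ae measurableSet_Ioo
      (ae_of_all _ fun s hs => by rw [ih s hs.1 (le_of_lt (lt_of_lt_of_le hs.2 hx1))]),
      step_false (m + 1) e hx0 hx1]

lemma word_cons (a : ℕ) (k : List ℕ) :
    word (a :: k) = word k ++ true :: List.replicate (a - 1) false := by
  simp [word, List.reverse_cons]

lemma WInt_word (k : List ℕ) (hk : ∀ a ∈ k, 0 < a) :
    ∀ x : ℝ, 0 < x → x ≤ 1 →
      WInt (word k) x = G (fun i : Fin k.length => k.get i) x := by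
  induction k with
  | nil =>
    intro x hx0 hx1
    have : word [] = [] := rfl
    rw [this, WInt_nil, G_nil]
  | cons a k ih =>
    intro x hx0 hx1
    have ha : 0 < a := hk a List.mem_cons_self
    have hk' : ∀ b ∈ k, 0 < b := fun b hb => hk b (List.mem_cons_of_mem a hb)
    rw [word_cons, step_aux (word k) (fun i : Fin k.length => k.get i) (ih hk') (a - 1) x hx0 hx1]
    have he : a - 1 + 1 = a := by omega
    rw [he]
    congr 1
    funext i
    refine Fin.cases ?_ ?_ i
    · rfl
    · intro j
      rfl
lemma term_le {c a : ℕ} (hc : 1 ≤ c) (ha : 2 ≤ a) (m : ℕ) :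
    ENNReal.ofReal ((1 : ℝ) / ((m + c + 1 : ℕ) : ℝ) ^ a)
      ≤ ENNReal.ofReal (1 / ((m + c : ℕ) : ℝ) - 1 / ((m + c + 1 : ℕ) : ℝ)) := by
  refine ENNReal.ofReal_le_ofReal ?_
  have h1 : (1 : ℝ) ≤ ((m + c : ℕ) : ℝ) := by exact_mod_cast Nat.one_le_iff_ne_zero.2 (by omega)
  have h2 : ((m + c + 1 : ℕ) : ℝ) = ((m + c : ℕ) : ℝ) + 1 := by push_cast; ring
  have hb : (1 : ℝ) ≤ ((m + c + 1 : ℕ) : ℝ) := by rw [h2]; linarith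
  have hpow : ((m + c + 1 : ℕ) : ℝ) ^ 2 ≤ ((m + c + 1 : ℕ) : ℝ) ^ a :=
    pow_le_pow_right₀ hb ha
  have hq : (1 : ℝ) / ((m + c + 1 : ℕ) : ℝ) ^ a ≤ 1 / ((m + c + 1 : ℕ) : ℝ) ^ 2 :=
    one_div_le_one_div_of_le (by positivity) hpow
  refine le_trans hq ?_
  rw [h2]
  have h3 : (0 : ℝ) < ((m + c : ℕ) : ℝ) := by linarith
  rw [div_sub_div _ _ (by linarith) (by linarith), one_mul, mul_one]
  have : ((m + c : ℕ) : ℝ) + 1 - ((m + c : ℕ) : ℝ) = 1 := by ring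
  rw [this]
  refine one_div_le_one_div_of_le (by positivity) ?_
  nlinarith

lemma tail_sum_le {c a : ℕ} (hc : 1 ≤ c) (ha : 2 ≤ a) :
    ∑' m : ℕ, ENNReal.ofReal ((1 : ℝ) / ((m + c + 1 : ℕ) : ℝ) ^ a)
      ≤ ENNReal.ofReal (1 / (c : ℝ)) := by
  refine le_trans (ENNReal.tsum_le_tsum (term_le hc ha)) ?_
  set f : ℕ → ℝ := fun m => 1 / ((m + c : ℕ) : ℝ) with hf
  have hmono : ∀ m, 0 ≤ f m - f (m + 1) := by
    intro m
    have h1 : (0:ℝ) < ((m + c : ℕ) : ℝ) := by exact_mod_cast Nat.pos_of_ne_zero (by omega)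
    have h2 : ((m + c : ℕ) : ℝ) ≤ ((m + 1 + c : ℕ) : ℝ) := by push_cast; linarith
    have := one_div_le_one_div_of_le h1 h2
    simp only [hf]
    have h3 : (m + 1 + c : ℕ) = (m + c + 1 : ℕ) := by omega
    rw [h3]
    rw [h3] at this
    linarith
  refine ENNReal.summable.tsum_le_of_sum_le fun s => ?_
  obtain ⟨N, hN⟩ : ∃ N, ∀ m ∈ s, m < N := ⟨(s.sup id) + 1, fun m hm =>
    Nat.lt_succ_of_le (Finset.le_sup (f := id) hm)⟩
  calc (∑ m ∈ s, ENNReal.ofReal (1 / ((m + c : ℕ) : ℝ) - 1 / ((m + c + 1 : ℕ) : ℝ)))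
      ≤ ∑ m ∈ Finset.range N, ENNReal.ofReal (f m - f (m + 1)) := by
        refine Finset.sum_le_sum_of_subset_of_nonneg (fun m hm => Finset.mem_range.2 (hN m hm))
          (fun _ _ _ => zero_le) |>.trans_eq ?_
        refine Finset.sum_congr rfl fun m _ => ?_
        simp only [hf, show m + 1 + c = m + c + 1 from by omega]
    _ = ENNReal.ofReal (∑ m ∈ Finset.range N, (f m - f (m + 1))) :=
        (ENNReal.ofReal_sum_of_nonneg fun m _ => hmono m).symm
    _ = ENNReal.ofReal (f 0 - f N) := by rw [Finset.sum_range_sub' f N]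
    _ ≤ ENNReal.ofReal (1 / (c : ℝ)) := by
        refine ENNReal.ofReal_le_ofReal ?_
        have : 0 ≤ f N := by positivity
        have h0 : f 0 = 1 / (c : ℝ) := by simp [hf]
        linarith [h0 ▸ sub_le_self (f 0) this]

lemma base_sum_lt_top {a : ℕ} (ha : 2 ≤ a) :
    ∑' m : ℕ, ENNReal.ofReal ((1 : ℝ) / ((m + 1 : ℕ) : ℝ) ^ a) < ⊤ := by
  have hle : ∀ m : ℕ, ENNReal.ofReal ((1 : ℝ) / ((m + 1 : ℕ) : ℝ) ^ a)
      ≤ ENNReal.ofReal ((1 : ℝ) / ((m + 1 : ℕ) : ℝ) ^ 2) := by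
    intro m
    refine ENNReal.ofReal_le_ofReal ?_
    have hb : (1 : ℝ) ≤ ((m + 1 : ℕ) : ℝ) := by exact_mod_cast Nat.succ_le_succ (Nat.zero_le m)
    exact one_div_le_one_div_of_le (by positivity) (pow_le_pow_right₀ hb ha)
  refine lt_of_le_of_lt (ENNReal.tsum_le_tsum hle) ?_
  have hsum : Summable (fun m : ℕ => (1 : ℝ) / ((m + 1 : ℕ) : ℝ) ^ 2) := by
    have h2 : Summable (fun n : ℕ => 1 / (n : ℝ) ^ 2) :=
      Real.summable_one_div_nat_pow.2 one_lt_two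
    have := (summable_nat_add_iff 1).2 h2
    refine this.congr fun m => ?_
    push_cast
    ring_nf
  rw [← ENNReal.ofReal_tsum_of_nonneg (fun m => by positivity) hsum]
  exact ENNReal.ofReal_lt_top

lemma coeff_tsum_lt_top : ∀ (p : ℕ) (e : Fin (p + 1) → ℕ),
    (∀ i, 0 < e i) → 2 ≤ e 0 → ∑' n : Idx (p + 1), coeff e n < ⊤ := by
  intro p
  induction p with
  | zero =>
    intro e he he0
    rw [← Equiv.tsum_eq (consEquiv 0), ENNReal.tsum_prod']
    have hval : ∀ (m : ℕ) (u : Idx 0), coeff e (consEquiv 0 (m, u))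
        = ENNReal.ofReal ((1 : ℝ) / ((m + 1 : ℕ) : ℝ) ^ (e 0)) := by
      intro m u
      rw [consEquiv_apply, ← Fin.cons_self_tail e, coeff_cons, consIdx_tail, consIdx_zero,
        Fin.cons_zero]
      have hu : u = default := Subsingleton.elim _ _
      have hfst : fst u = 0 := by rw [fst, dif_neg (lt_irrefl 0)]
      have hc : coeff (Fin.tail e) u = 1 := by
        rw [coeff]
        exact Finset.prod_of_isEmpty _
      rw [hfst, hc, mul_one]
      try norm_num
    calc (∑' (m : ℕ) (u : Idx 0), coeff e (consEquiv 0 (m, u)))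
        = ∑' m : ℕ, ENNReal.ofReal ((1 : ℝ) / ((m + 1 : ℕ) : ℝ) ^ (e 0)) := by
          refine tsum_congr fun m => ?_
          rw [tsum_eq_single (default : Idx 0)
            (fun b hb => absurd (Subsingleton.elim b default) hb), hval]
      _ < ⊤ := base_sum_lt_top he0
  | succ p ih =>
    intro e he he0
    rw [← Equiv.tsum_eq (consEquiv (p + 1)), ENNReal.tsum_prod', ENNReal.tsum_comm]
    set e' : Fin (p + 1) → ℕ := Fin.cons (Fin.tail e 0 + 1) (Fin.tail (Fin.tail e)) with he'
    have key : ∀ n : Idx (p + 1), (∑' m : ℕ, coeff e (consEquiv (p + 1) (m, n)))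
        ≤ coeff e' n := by
      intro n
      have hstep : ∀ m : ℕ, coeff e (consEquiv (p + 1) (m, n))
          = ENNReal.ofReal ((1 : ℝ) / ((m + fst n + 1 : ℕ) : ℝ) ^ (e 0)) *
            coeff (Fin.tail e) n := by
        intro m
        rw [consEquiv_apply, ← Fin.cons_self_tail e, coeff_cons, consIdx_tail, consIdx_zero,
          Fin.cons_self_tail]
        try norm_num
      calc (∑' m : ℕ, coeff e (consEquiv (p + 1) (m, n)))
          = (∑' m : ℕ, ENNReal.ofReal ((1 : ℝ) / ((m + fst n + 1 : ℕ) : ℝ) ^ (e 0))) *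
              coeff (Fin.tail e) n := by
            rw [← ENNReal.tsum_mul_right]
            exact tsum_congr hstep
        _ ≤ ENNReal.ofReal (1 / (fst n : ℝ)) * coeff (Fin.tail e) n :=
            mul_le_mul_left (tail_sum_le (fst_pos n) he0) _
        _ = coeff e' n := by
            rw [he', coeff_cons, ← Fin.cons_self_tail (Fin.tail e), coeff_cons,
              Fin.cons_self_tail, ← mul_assoc]
            congr 1
            rw [← ENNReal.ofReal_mul (by positivity), fst_succ]
            congr 1
            rw [pow_succ, one_div_mul_one_div, mul_comm]
    refine lt_of_le_of_lt (ENNReal.tsum_le_tsum key) (ih e' ?_ ?_)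
    · intro i
      refine Fin.cases ?_ ?_ i
      · show 0 < e' 0
        have h1 : 0 < Fin.tail e 0 := he (Fin.succ 0)
        rw [he', Fin.cons_zero]
        omega
      · intro j
        show 0 < e' j.succ
        rw [he', Fin.cons_succ]
        exact he _
    · show 2 ≤ e' 0
      have h1 : 0 < Fin.tail e 0 := he (Fin.succ 0)
      rw [he', Fin.cons_zero]
      omega
lemma h_nonneg {b : Bool} {s : ℝ} (hs : s ∈ Set.Ioo (0 : ℝ) 1) : 0 ≤ h b s := by
  cases b
  · have h1 := hs.1
    simp only [h, Bool.false_eq_true, if_false]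
    positivity
  · have h2 : (0 : ℝ) < 1 - s := by linarith [hs.2]
    simp only [h, if_true]
    positivity

end Kont

open Kont in
theorem kontsevich_integral (k : List ℕ)
    (hk : ∀ a ∈ k, 0 < a) (hk1 : 2 ≤ k.headI) :
    IntegrableOn
      (fun t : Fin (word k).length → ℝ => ∏ i : Fin (word k).length, h ((word k).get i) (t i))
      (simplex (word k).length) volume ∧
    (∫ t in simplex (word k).length,
        ∏ i : Fin (word k).length, h ((word k).get i) (t i)) = zeta k := by
  classical
  obtain ⟨a, k', rfl⟩ : ∃ a k', k = a :: k' := by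
    cases k with
    | nil => simp at hk1
    | cons a k' => exact ⟨a, k', rfl⟩
  have hk1' : 2 ≤ a := by simpa using hk1
  set w := word (a :: k') with hw
  set N := w.length with hN
  set e : Fin (a :: k').length → ℕ := fun i => (a :: k').get i with he
  set f : (Fin N → ℝ) → ℝ := fun t => ∏ i, h (w.get i) (t i) with hf
  set Z : ℝ≥0∞ := ∑' n : Idx (a :: k').length, coeff e n with hZ
  have hsimp : simplex N = S N 1 := rfl
  have hfm : Measurable f :=
    Finset.measurable_prod _ fun i _ => (measurable_h _).comp (measurable_pi_apply i)
  have hnn : ∀ t ∈ S N 1, ∀ i, 0 ≤ h (w.get i) (t i) := fun t ht i => h_nonneg (ht.2 i)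
  have hfnn : ∀ t ∈ S N 1, 0 ≤ f t := fun t ht => Finset.prod_nonneg fun i _ => hnn t ht i
  have hofReal : ∀ t ∈ S N 1, ENNReal.ofReal (f t) = ∏ i, hE (w.get i) (t i) := by
    intro t ht
    rw [hf]
    exact ENNReal.ofReal_prod_of_nonneg fun i _ => hnn t ht i
  have hlint : ∫⁻ t in S N 1, ENNReal.ofReal (f t) = Z := by
    calc (∫⁻ t in S N 1, ENNReal.ofReal (f t))
        = ∫⁻ t in S N 1, ∏ i, hE (w.get i) (t i) :=
          setLIntegral_congr_fun_ae (measurableSet_S _ _) (ae_of_all _ hofReal)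
      _ = WInt w 1 := rfl
      _ = G e 1 := WInt_word _ hk 1 one_pos le_rfl
      _ = Z := by
          rw [G, hZ]
          refine tsum_congr fun n => ?_
          rw [ENNReal.ofReal_one, one_pow, mul_one]
  have hfin : Z < ⊤ := by
    rw [hZ]
    refine coeff_tsum_lt_top k'.length e (fun i => hk _ (List.get_mem (a :: k') i)) ?_
    exact hk1'
  have hco : ∀ n : Idx (a :: k').length,
      coeff e n = ENNReal.ofReal (∏ i, (1 : ℝ) / (n.1 i : ℝ) ^ (e i)) := fun n =>
    (ENNReal.ofReal_prod_of_nonneg fun i _ => by positivity).symm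
  have hnnae : 0 ≤ᵐ[volume.restrict (S N 1)] f :=
    (ae_restrict_mem (measurableSet_S N 1)).mono fun t ht => hfnn t ht
  constructor
  · refine ⟨hfm.aestronglyMeasurable, ?_⟩
    rw [hasFiniteIntegral_def]
    have hnorm : ∫⁻ t in S N 1, ‖f t‖ₑ = ∫⁻ t in S N 1, ENNReal.ofReal (f t) :=
      setLIntegral_congr_fun_ae (measurableSet_S _ _)
        (ae_of_all _ fun t ht => by rw [Real.enorm_eq_ofReal (hfnn t ht)])
    rw [hsimp, hnorm, hlint]
    exact hfin
  · rw [hsimp, integral_eq_lintegral_of_nonneg_ae hnnae hfm.aestronglyMeasurable, hlint]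
    calc Z.toReal
        = ∑' n : Idx (a :: k').length, (coeff e n).toReal :=
          ENNReal.tsum_toReal_eq fun n => by rw [hco n]; exact ENNReal.ofReal_ne_top
      _ = zeta (a :: k') := by
          rw [zeta]
          refine tsum_congr fun n => ?_
          rw [hco n, ENNReal.toReal_ofReal (Finset.prod_nonneg fun i _ => by positivity)]
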